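/- In a unital algebra, suppose $g$ and $e$ satisfy $e^2 = e$, $eg = ge$, and $g^2 = u^2 + v e g$ with $u$ invertible. Then for any scalar $\gamma$, the element $g' := (\gamma + (1-\gamma)e)g$ satisfies the quadratic relation $g'^2 = u^2\gamma^2 + u^2(1-\gamma^2)e + v\, e\, g'$. -/
import Mathlib


/-- If `e² = e`, `eg = ge` and `g² = u² + v e g` with `u` invertible, then for
any scalar `γ`, the element `g' := (γ + (1-γ)e) g` satisfies
`g'² = u²γ² + u²(1-γ²) e + v e g'`. -/
theorem deformed_quadratic (R A : Type*) [CommRing R] [Ring A] [Algebra R A]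
    (u : Rˣ) (v γ : R) (g e : A)
    (he : e * e = e) (hc : e * g = g * e)
    (hq : g * g = ((u : R) * (u : R)) • (1 : A) + v • (e * g)) :
    ((γ • (1 : A) + (1 - γ) • e) * g) * ((γ • (1 : A) + (1 - γ) • e) * g)
      = ((u : R) * (u : R) * γ * γ) • (1 : A)
        + ((u : R) * (u : R) * (1 - γ * γ)) • e
        + v • (e * ((γ • (1 : A) + (1 - γ) • e) * g)) := by
  have hge : g * e = e * g := hc.symm
  have h1 : g * (e * g) = e * (g * g) := by rw [← mul_assoc, hge, mul_assoc]
  have h2 : e * (e * g) = e * g := by rw [← mul_assoc, he]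
  simp only [add_mul, mul_add, smul_mul_assoc, mul_smul_comm, one_mul, mul_one,
    mul_assoc, h1, h2, he, hq, smul_add, smul_smul]
  module
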